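/- If Y and Y' are central elements of U(g), and D_Y, D_{Y'}, D_{YY'} are the unique differential operators on the formal torus H such that (L(Z)φ)|_h = D_Z φ|_h for every Whittaker function φ (Z = Y, Y', YY'), then D_{YY'} = D_Y D_{Y'}. In particular, the operators D_Y for central Y commute pairwise. -/
import Mathlib


/-- Proposition 1.3(ii): if `Y, Y'` are central in `U(g)` and `D_Y, D_{Y'},
D_{YY'}` are the (unique) operators on functions on the formal torus such that
`(L(Z)φ)|_h = D_Z (φ|_h)` for every Whittaker function `φ`, then
`D_{YY'} = D_Y D_{Y'}`; in particular the `D_Y` for central `Y` commute.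

Here `U` plays the role of `U(g)`, `A` of `A_g = U(g)*`, `AH` of the functions
on the torus `H`, `res : A → AH` of the restriction, `Wh` of the Whittaker
condition (for fixed nondegenerate characters `χ±`); `hstab` records the key
point that `L(Z)` preserves Whittaker functions for central `Z`, and `hsurj`
the Frobenius-reciprocity identification of Whittaker functions with `AH`. -/
theorem statement5 (U A AH : Type*) [Ring U] [Algebra ℂ U]
    [AddCommGroup A] [Module ℂ A] [AddCommGroup AH] [Module ℂ AH]
    (L : U →ₐ[ℂ] Module.End ℂ A) (res : A →ₗ[ℂ] AH)
    (Wh : A → Prop)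
    (hstab : ∀ Z : U, (∀ u, Z * u = u * Z) → ∀ φ, Wh φ → Wh (L Z φ))
    (hsurj : ∀ ψ : AH, ∃ φ, Wh φ ∧ res φ = ψ)
    (Y Y' : U) (hY : ∀ u, Y * u = u * Y) (hY' : ∀ u, Y' * u = u * Y')
    (DY DY' DYY' : Module.End ℂ AH)
    (hDY : ∀ φ, Wh φ → res (L Y φ) = DY (res φ))
    (hDY' : ∀ φ, Wh φ → res (L Y' φ) = DY' (res φ))
    (hDYY' : ∀ φ, Wh φ → res (L (Y * Y') φ) = DYY' (res φ)) :
    DYY' = DY * DY' ∧ Commute DY DY' := by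
  have key : ∀ (E : Module.End ℂ AH), (∀ φ, Wh φ → res (L (Y * Y') φ) = E (res φ)) →
      ∀ ψ : AH, E ψ = DY (DY' ψ) := by
    intro E hE ψ
    obtain ⟨φ, hφ, hres⟩ := hsurj ψ
    have h1 : L (Y * Y') φ = L Y (L Y' φ) := by rw [map_mul]; rfl
    calc E ψ = res (L (Y * Y') φ) := by rw [← hres, ← hE φ hφ]
    _ = res (L Y (L Y' φ)) := by rw [h1]
    _ = DY (res (L Y' φ)) := hDY _ (hstab Y' hY' φ hφ)
    _ = DY (DY' (res φ)) := by rw [hDY' φ hφ]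
    _ = DY (DY' ψ) := by rw [hres]
  have h1 : DYY' = DY * DY' := by
    ext ψ; exact key DYY' hDYY' ψ
  refine ⟨h1, ?_⟩
  have hswap : ∀ φ, Wh φ → res (L (Y * Y') φ) = (DY' * DY) (res φ) := by
    intro φ hφ
    have : L (Y * Y') φ = L Y' (L Y φ) := by rw [hY Y', map_mul]; rfl
    rw [this]
    calc res (L Y' (L Y φ)) = DY' (res (L Y φ)) := hDY' _ (hstab Y hY φ hφ)
    _ = DY' (DY (res φ)) := by rw [hDY φ hφ]
    _ = (DY' * DY) (res φ) := rfl
  have h2 : DY' * DY = DY * DY' := by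
    ext ψ; exact key (DY' * DY) hswap ψ
  exact h2.symm
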